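/- Let (▷, f := 0, ·_V) be a crossed data of a 4-algebra A by a vector space V with trivial cocycle f = 0. Then the crossed product multiplication makes V × A a 4-algebra (the semidirect product V ⋉ A) if and only if (V, ·_V) is a 4-algebra and a²▷x² + 2 x²·_V (a▷x) + 2 (a▷x)² + 2 a²▷(a▷x) = 0 for all a ∈ A, x ∈ V. -/
import Mathlib


structure FourAlgebra (k : Type*) (A : Type*) [Field k] [AddCommGroup A] [Module k A] where
  mul : A →ₗ[k] A →ₗ[k] A
  comm : ∀ a b : A, mul a b = mul b a
  four : ∀ a : A, mul (mul a a) (mul a a) = 0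

private lemma cancel2' {k V : Type*} [Field k] [AddCommGroup V] [Module k V]
    (h2 : (2 : k) ≠ 0) {v : V} (h : v + v = 0) : v = 0 := by
  have h' : (2 : k) • v = 0 := by rw [two_smul]; exact h
  rcases smul_eq_zero.mp h' with h | h
  · exact absurd h h2
  · exact h

theorem stmt8 (k A V : Type*) [Field k] [AddCommGroup A] [Module k A]
    [AddCommGroup V] [Module k V] (h2 : (2 : k) ≠ 0) (FA : FourAlgebra k A)
    (tr : A →ₗ[k] V →ₗ[k] V) (mv : V →ₗ[k] V →ₗ[k] V) :
    let p : V × A → V × A → V × A := fun z w =>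
      (mv z.1 w.1 + tr z.2 w.1 + tr w.2 z.1, FA.mul z.2 w.2)
    ((∀ z w, p z w = p w z) ∧ (∀ z, p (p z z) (p z z) = 0)) ↔
      ((∀ x y : V, mv x y = mv y x) ∧ (∀ x : V, mv (mv x x) (mv x x) = 0) ∧
       (∀ (a : A) (x : V), tr (FA.mul a a) (mv x x) + 2 • mv (mv x x) (tr a x)
          + 2 • mv (tr a x) (tr a x) + 2 • tr (FA.mul a a) (tr a x) = 0)) := by
  intro p
  constructor
  · rintro ⟨hc, hf⟩
    have hmc : ∀ x y : V, mv x y = mv y x := by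
      intro x y
      have h := congrArg Prod.fst (hc (x, 0) (y, 0))
      simpa [p] using h
    have hm4 : ∀ x : V, mv (mv x x) (mv x x) = 0 := by
      intro x
      have h := congrArg Prod.fst (hf (x, 0))
      simpa [p] using h
    refine ⟨hmc, hm4, ?_⟩
    intro a x
    set s := mv x x with hs
    set t := tr a x with ht
    set b := FA.mul a a with hb
    have E : mv (s + t + t) (s + t + t) + tr b (s + t + t) + tr b (s + t + t) = 0 := by
      have h := congrArg Prod.fst (hf (x, a))
      simpa [p] using h
    refine cancel2' h2 ?_
    have expand : (tr b s + 2 • mv s t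
          + 2 • mv t t + 2 • tr b t) + (tr b s + 2 • mv s t
          + 2 • mv t t + 2 • tr b t)
        = mv (s + t + t) (s + t + t) + tr b (s + t + t) + tr b (s + t + t)
          - mv s s - (mv t s - mv s t) - (mv t s - mv s t) := by
      simp only [map_add, LinearMap.add_apply, two_nsmul]
      abel
    rw [expand, E, hm4 x, hmc t s]
    abel
  · rintro ⟨hmc, hm4, hI⟩
    constructor
    · intro z w
      have h1 : (p z w).1 = (p w z).1 := by
        simp only [p]
        rw [hmc]
        abel
      have h2' : (p z w).2 = (p w z).2 := FA.comm z.2 w.2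
      exact Prod.ext h1 h2'
    · rintro ⟨x, a⟩
      set s := mv x x with hs
      set t := tr a x with ht
      set b := FA.mul a a with hb
      have h1 : (p (p (x, a) (x, a)) (p (x, a) (x, a))).1 = 0 := by
        show mv (s + t + t) (s + t + t) + tr b (s + t + t) + tr b (s + t + t) = 0
        have key := hI a x
        have expand : mv (s + t + t) (s + t + t) + tr b (s + t + t) + tr b (s + t + t)
            = (tr b s + 2 • mv s t + 2 • mv t t + 2 • tr b t)
              + (tr b s + 2 • mv s t + 2 • mv t t + 2 • tr b t)
              + mv s s + (mv t s - mv s t) + (mv t s - mv s t) := by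
          simp only [map_add, LinearMap.add_apply, two_nsmul]
          abel
        rw [expand, key, hm4 x, hmc t s]
        abel
      have h2' : (p (p (x, a) (x, a)) (p (x, a) (x, a))).2 = 0 := by
        show FA.mul (FA.mul a a) (FA.mul a a) = 0
        exact FA.four a
      exact Prod.ext h1 h2'
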